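/- Let A be a commutative ring and e ≥ 1, k ≥ 0 integers. Then R₋ := A[x,y,t]/( (xy − t^e) + the ideal generated by all monomials y^β t^γ with βe + γ ≥ k+1 ) is a free A-module with basis given by the images of the monomials x^i·t^γ for i ≥ 0 and 0 ≤ γ ≤ k, together with y^j·t^γ for j ≥ 1, γ ≥ 0 and j·e + γ ≤ k. In particular, R₋ is generated as a module over A[t]/(t^{k+1}) by the images of x^i (i ≥ 0) and y^j (j ≥ 1), and the A[t]/(t^{k+1})-submodule generated by the x^i is a free direct summand with basis {x^i : i ≥ 0}. -/

import Mathlib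

open MvPolynomial

/-- The ideal defining `R₋ = A[x,y,t]/((xy − t^e) + (y^β t^γ : βe+γ ≥ k+1))`,
with `x = X 0`, `y = X 1`, `t = X 2`. -/
noncomputable def stmt10I (A : Type*) [CommRing A] (e k : ℕ) :
    Ideal (MvPolynomial (Fin 3) A) :=
  Ideal.span ({X 0 * X 1 - (X 2) ^ e} ∪
    {p | ∃ β γ : ℕ, k + 1 ≤ β * e + γ ∧ p = (X 1) ^ β * (X 2) ^ γ})

namespace Stmt10Aux

abbrev Sk (e k : ℕ) := {p : ℕ × ℕ // p.2 ≤ k} ⊕ {p : ℕ × ℕ // 1 ≤ p.1 ∧ p.1 * e + p.2 ≤ k}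

def nf' (e k : ℕ) (a b c : ℕ) : Option (Sk e k) :=
  if h : b ≤ a then
    if h2 : c + b * e ≤ k then some (Sum.inl ⟨(a - b, c + b * e), h2⟩) else none
  else
    if h2 : (b - a) * e + (c + a * e) ≤ k then
      some (Sum.inr ⟨(b - a, c + a * e), by omega, h2⟩) else none

def nf (e k : ℕ) (n : Fin 3 →₀ ℕ) : Option (Sk e k) := nf' e k (n 0) (n 1) (n 2)

theorem nf'_xy (e k a b c : ℕ) : nf' e k (a+1) (b+1) c = nf' e k a b (c+e) := by
  unfold nf'
  have hb : (b+1)*e = b*e + e := by ring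
  have ha : (a+1)*e = a*e + e := by ring
  simp only [hb, ha]
  split_ifs with h1 h2 h3 h4 h5 h6 h7 <;>
    simp_all [Sum.inl.injEq, Sum.inr.injEq, Subtype.mk.injEq, Prod.mk.injEq] <;> omega

theorem nf'_yt (e k a b c β γ : ℕ) (h : k + 1 ≤ β * e + γ) :
    nf' e k a (b + β) (c + γ) = none := by
  unfold nf'
  have h1 : β * e ≤ (b + β) * e := Nat.mul_le_mul_right e (by omega)
  have h2 : β * e ≤ (b + β - a) * e + a * e := by
    rw [← Nat.add_mul]
    exact Nat.mul_le_mul_right e (by omega)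
  split_ifs with hh hh2 hh3 <;> first | rfl | omega

theorem coord_decomp (n : Fin 3 →₀ ℕ) :
    n = Finsupp.single 0 (n 0) + Finsupp.single 1 (n 1) + Finsupp.single 2 (n 2) := by
  ext i
  fin_cases i <;> simp [Finsupp.single_apply]

variable {A : Type*} [CommRing A]

noncomputable def nfvec (A : Type*) [CommRing A] (e k : ℕ) (n : Fin 3 →₀ ℕ) : Sk e k →₀ A :=
  (nf e k n).elim 0 (fun s => Finsupp.single s 1)

noncomputable def phi (A : Type*) [CommRing A] (e k : ℕ) :
    MvPolynomial (Fin 3) A →ₗ[A] (Sk e k →₀ A) :=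
  (MvPolynomial.basisMonomials (Fin 3) A).constr ℕ (nfvec A e k)

theorem phi_monomial (e k : ℕ) (n : Fin 3 →₀ ℕ) (a : A) :
    phi A e k (monomial n a) = a • nfvec A e k n := by
  have : (monomial n a : MvPolynomial (Fin 3) A) = a • monomial n 1 := by
    rw [MvPolynomial.smul_monomial, smul_eq_mul, mul_one]
  rw [this, map_smul]
  congr 1
  have := (MvPolynomial.basisMonomials (Fin 3) A).constr_basis ℕ (nfvec A e k) n
  unfold phi
  simpa using this

theorem mono3 (p q r : ℕ) :
    (X 0 : MvPolynomial (Fin 3) A) ^ p * X 1 ^ q * X 2 ^ r =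
      monomial (Finsupp.single 0 p + Finsupp.single 1 q + Finsupp.single 2 r) 1 := by
  rw [X_pow_eq_monomial, X_pow_eq_monomial, X_pow_eq_monomial, monomial_mul, monomial_mul,
    one_mul, one_mul]

theorem monomial_coords (n : Fin 3 →₀ ℕ) (a : A) :
    monomial n a = monomial (Finsupp.single 0 (n 0) + Finsupp.single 1 (n 1) +
      Finsupp.single 2 (n 2)) a := by rw [← coord_decomp]

theorem phi_mul_gen1 (e k : ℕ) (q : MvPolynomial (Fin 3) A) :
    phi A e k (q * (X 0 * X 1 - X 2 ^ e)) = 0 := by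
  induction q using MvPolynomial.induction_on' with
  | add p q hp hq => rw [add_mul, map_add, hp, hq, add_zero]
  | monomial n a =>
    rw [mul_sub, ← mul_assoc]
    have h1 : (monomial n a : MvPolynomial (Fin 3) A) * X 0 * X 1 =
        monomial (n + ((Finsupp.single 0 1 + Finsupp.single 1 1 : Fin 3 →₀ ℕ))) a := by
      rw [show (X 0 : MvPolynomial (Fin 3) A) = monomial (Finsupp.single 0 1) 1 from rfl,
        show (X 1 : MvPolynomial (Fin 3) A) = monomial (Finsupp.single 1 1) 1 from rfl,
        monomial_mul, monomial_mul, mul_one, mul_one, add_assoc]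
    have h2 : (monomial n a : MvPolynomial (Fin 3) A) * X 2 ^ e =
        monomial (n + (Finsupp.single 2 e : Fin 3 →₀ ℕ)) a := by
      rw [X_pow_eq_monomial, monomial_mul, mul_one]
    rw [h1, h2, map_sub, phi_monomial, phi_monomial]
    have : nf e k (n + ((Finsupp.single 0 1 + Finsupp.single 1 1 : Fin 3 →₀ ℕ))) =
        nf e k (n + (Finsupp.single 2 e : Fin 3 →₀ ℕ)) := by
      unfold nf
      have c0 : (n + ((Finsupp.single 0 1 + Finsupp.single 1 1 : Fin 3 →₀ ℕ))) 0 = n 0 + 1 := by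
        simp [Finsupp.single_apply]
      have c1 : (n + ((Finsupp.single 0 1 + Finsupp.single 1 1 : Fin 3 →₀ ℕ))) 1 = n 1 + 1 := by
        simp [Finsupp.single_apply]
      have c2 : (n + ((Finsupp.single 0 1 + Finsupp.single 1 1 : Fin 3 →₀ ℕ))) 2 = n 2 := by
        simp [Finsupp.single_apply]
      have d0 : (n + (Finsupp.single 2 e : Fin 3 →₀ ℕ)) 0 = n 0 := by simp [Finsupp.single_apply]
      have d1 : (n + (Finsupp.single 2 e : Fin 3 →₀ ℕ)) 1 = n 1 := by simp [Finsupp.single_apply]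
      have d2 : (n + (Finsupp.single 2 e : Fin 3 →₀ ℕ)) 2 = n 2 + e := by simp [Finsupp.single_apply]
      rw [c0, c1, c2, d0, d1, d2, nf'_xy]
    unfold nfvec
    rw [this, sub_self]

theorem phi_mul_gen2 (e k : ℕ) (β γ : ℕ) (h : k + 1 ≤ β * e + γ)
    (q : MvPolynomial (Fin 3) A) :
    phi A e k (q * (X 1 ^ β * X 2 ^ γ)) = 0 := by
  induction q using MvPolynomial.induction_on' with
  | add p q hp hq => rw [add_mul, map_add, hp, hq, add_zero]
  | monomial n a =>
    have h1 : (monomial n a : MvPolynomial (Fin 3) A) * (X 1 ^ β * X 2 ^ γ) =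
        monomial (n + ((Finsupp.single 1 β + Finsupp.single 2 γ : Fin 3 →₀ ℕ))) a := by
      rw [X_pow_eq_monomial, X_pow_eq_monomial, monomial_mul, monomial_mul, mul_one, mul_one]
    rw [h1, phi_monomial]
    have : nf e k (n + ((Finsupp.single 1 β + Finsupp.single 2 γ : Fin 3 →₀ ℕ))) = none := by
      unfold nf
      have c0 : (n + ((Finsupp.single 1 β + Finsupp.single 2 γ : Fin 3 →₀ ℕ))) 0 = n 0 := by
        simp [Finsupp.single_apply]
      have c1 : (n + ((Finsupp.single 1 β + Finsupp.single 2 γ : Fin 3 →₀ ℕ))) 1 = n 1 + β := by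
        simp [Finsupp.single_apply]
      have c2 : (n + ((Finsupp.single 1 β + Finsupp.single 2 γ : Fin 3 →₀ ℕ))) 2 = n 2 + γ := by
        simp [Finsupp.single_apply]
      rw [c0, c1, c2, nf'_yt e k _ _ _ _ _ h]
    unfold nfvec
    rw [this]
    simp

theorem phi_ideal (e k : ℕ) (f : MvPolynomial (Fin 3) A) (hf : f ∈ stmt10I A e k) :
    phi A e k f = 0 := by
  have main : ∀ f ∈ stmt10I A e k, ∀ q, phi A e k (q * f) = 0 := by
    intro f hf
    refine Submodule.span_induction ?_ ?_ ?_ ?_ hf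
    · rintro x (rfl | ⟨β, γ, hβγ, rfl⟩)
      · exact fun q => phi_mul_gen1 e k q
      · exact fun q => phi_mul_gen2 e k β γ hβγ q
    · intro q; rw [mul_zero, map_zero]
    · intro x y _ _ hx hy q; rw [mul_add, map_add, hx, hy, add_zero]
    · intro r x _ hx q
      rw [smul_eq_mul, ← mul_assoc]
      exact hx (q * r)
  have := main f hf 1
  rwa [one_mul] at this


noncomputable section QuotientPart

variable (A : Type*) [CommRing A] (e k : ℕ)

local notation "I" => stmt10I A e k
local notation "mkI" => Ideal.Quotient.mk (stmt10I A e k)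

def mon : Sk e k → MvPolynomial (Fin 3) A :=
  Sum.elim (fun p => X 0 ^ p.1.1 * X 2 ^ p.1.2) (fun p => X 1 ^ p.1.1 * X 2 ^ p.1.2)

def phibar : (MvPolynomial (Fin 3) A ⧸ stmt10I A e k) →ₗ[A] (Sk e k →₀ A) :=
  (Submodule.liftQ (Submodule.restrictScalars A (stmt10I A e k)) (phi A e k)
    (fun x hx => phi_ideal e k x hx)).comp
    (Submodule.Quotient.restrictScalarsEquiv A (stmt10I A e k)).symm.toLinearMap

theorem phibar_mk (p : MvPolynomial (Fin 3) A) : phibar A e k (mkI p) = phi A e k p := by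
  rfl

def theta : (Sk e k →₀ A) →ₗ[A] (MvPolynomial (Fin 3) A ⧸ stmt10I A e k) :=
  Finsupp.linearCombination A (fun s => mkI (mon A e k s))

theorem phi_mon (s : Sk e k) : phi A e k (mon A e k s) = Finsupp.single s 1 := by
  rcases s with ⟨⟨i, γ⟩, h⟩ | ⟨⟨j, γ⟩, hj, h⟩
  · have hm : (mon A e k (Sum.inl ⟨(i, γ), h⟩) : MvPolynomial (Fin 3) A) =
        monomial (Finsupp.single 0 i + Finsupp.single 1 0 + Finsupp.single 2 γ) 1 := by
      rw [← mono3, pow_zero, mul_one]; rfl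
    rw [hm, phi_monomial, one_smul]
    unfold nfvec nf
    have c0 : ((Finsupp.single 0 i + Finsupp.single 1 0 + Finsupp.single 2 γ :
        Fin 3 →₀ ℕ)) 0 = i := by simp [Finsupp.single_apply]
    have c1 : ((Finsupp.single 0 i + Finsupp.single 1 0 + Finsupp.single 2 γ :
        Fin 3 →₀ ℕ)) 1 = 0 := by simp [Finsupp.single_apply]
    have c2 : ((Finsupp.single 0 i + Finsupp.single 1 0 + Finsupp.single 2 γ :
        Fin 3 →₀ ℕ)) 2 = γ := by simp [Finsupp.single_apply]
    rw [c0, c1, c2]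
    unfold nf'
    rw [dif_pos (Nat.zero_le i), dif_pos (by simpa using h)]
    simp
  · have hm : (mon A e k (Sum.inr ⟨(j, γ), hj, h⟩) : MvPolynomial (Fin 3) A) =
        monomial (Finsupp.single 0 0 + Finsupp.single 1 j + Finsupp.single 2 γ) 1 := by
      rw [← mono3, pow_zero, one_mul]; rfl
    rw [hm, phi_monomial, one_smul]
    unfold nfvec nf
    have c0 : ((Finsupp.single 0 0 + Finsupp.single 1 j + Finsupp.single 2 γ :
        Fin 3 →₀ ℕ)) 0 = 0 := by simp [Finsupp.single_apply]
    have c1 : ((Finsupp.single 0 0 + Finsupp.single 1 j + Finsupp.single 2 γ :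
        Fin 3 →₀ ℕ)) 1 = j := by simp [Finsupp.single_apply]
    have c2 : ((Finsupp.single 0 0 + Finsupp.single 1 j + Finsupp.single 2 γ :
        Fin 3 →₀ ℕ)) 2 = γ := by simp [Finsupp.single_apply]
    rw [c0, c1, c2]
    unfold nf'
    rw [dif_neg (by omega), dif_pos (by simpa using h)]
    simp

theorem mem_gen2 (β γ : ℕ) (h : k + 1 ≤ β * e + γ) :
    (X 1 : MvPolynomial (Fin 3) A) ^ β * X 2 ^ γ ∈ stmt10I A e k :=
  Ideal.subset_span (Or.inr ⟨β, γ, h, rfl⟩)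

theorem mem_gen1 : (X 0 * X 1 - X 2 ^ e : MvPolynomial (Fin 3) A) ∈ stmt10I A e k :=
  Ideal.subset_span (Or.inl rfl)

theorem mk_monomial_one (n : Fin 3 →₀ ℕ) :
    mkI (monomial n 1) = (nf e k n).elim 0 (fun s => mkI (mon A e k s)) := by
  have hm : (monomial n 1 : MvPolynomial (Fin 3) A) =
      X 0 ^ (n 0) * X 1 ^ (n 1) * X 2 ^ (n 2) := by
    rw [mono3, ← coord_decomp]
  rw [hm]
  unfold nf
  generalize n 0 = a, n 1 = b, n 2 = c
  rcases le_or_gt b a with hba | hab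
  · obtain ⟨i, rfl⟩ : ∃ i, a = i + b := ⟨a - b, by omega⟩
    have key : mkI (X 0 ^ (i + b) * X 1 ^ b * X 2 ^ c) = mkI (X 0 ^ i * X 2 ^ (c + b * e)) := by
      rw [Ideal.Quotient.eq]
      have hd : (X 0 : MvPolynomial (Fin 3) A) ^ (i + b) * X 1 ^ b * X 2 ^ c -
          X 0 ^ i * X 2 ^ (c + b * e) =
          (X 0 ^ i * X 2 ^ c) * ((X 0 * X 1) ^ b - (X 2 ^ e) ^ b) := by
        ring
      rw [hd]
      obtain ⟨w, hw⟩ := sub_dvd_pow_sub_pow (X 0 * X 1 : MvPolynomial (Fin 3) A) (X 2 ^ e) b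
      rw [hw]
      exact Ideal.mul_mem_left _ _ (Ideal.mul_mem_right _ _ (mem_gen1 A e k))
    rw [key]
    unfold nf'
    rw [dif_pos (by omega)]
    by_cases h2 : c + b * e ≤ k
    · rw [dif_pos h2]
      have : i + b - b = i := by omega
      simp only [this, Option.elim]
      rfl
    · rw [dif_neg h2]
      simp only [Option.elim]
      rw [Ideal.Quotient.eq_zero_iff_mem,
        show (X 0 : MvPolynomial (Fin 3) A) ^ i * X 2 ^ (c + b * e) =
          X 0 ^ i * (X 1 ^ 0 * X 2 ^ (c + b * e)) by ring]
      exact Ideal.mul_mem_left _ _ (mem_gen2 A e k 0 (c + b * e) (by omega))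
  · obtain ⟨j, rfl⟩ : ∃ j, b = j + a := ⟨b - a, by omega⟩
    have hj1 : 1 ≤ j := by omega
    have key : mkI (X 0 ^ a * X 1 ^ (j + a) * X 2 ^ c) = mkI (X 1 ^ j * X 2 ^ (c + a * e)) := by
      rw [Ideal.Quotient.eq]
      have hd : (X 0 : MvPolynomial (Fin 3) A) ^ a * X 1 ^ (j + a) * X 2 ^ c -
          X 1 ^ j * X 2 ^ (c + a * e) =
          (X 1 ^ j * X 2 ^ c) * ((X 0 * X 1) ^ a - (X 2 ^ e) ^ a) := by
        ring
      rw [hd]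
      obtain ⟨w, hw⟩ := sub_dvd_pow_sub_pow (X 0 * X 1 : MvPolynomial (Fin 3) A) (X 2 ^ e) a
      rw [hw]
      exact Ideal.mul_mem_left _ _ (Ideal.mul_mem_right _ _ (mem_gen1 A e k))
    rw [key]
    unfold nf'
    rw [dif_neg (by omega)]
    have hja : j + a - a = j := by omega
    by_cases h2 : (j + a - a) * e + (c + a * e) ≤ k
    · rw [dif_pos h2]
      simp only [hja, Option.elim]
      rfl
    · rw [dif_neg h2]
      simp only [Option.elim]
      rw [Ideal.Quotient.eq_zero_iff_mem]
      rw [hja] at h2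
      exact mem_gen2 A e k j (c + a * e) (by omega)

theorem mk_smul (a : A) (p : MvPolynomial (Fin 3) A) : mkI (a • p) = a • mkI p := by
  exact Submodule.Quotient.mk_smul ((stmt10I A e k).restrictScalars A) a p

theorem mk_monomial (n : Fin 3 →₀ ℕ) (a : A) :
    mkI (monomial n a) = a • (nf e k n).elim 0 (fun s => mkI (mon A e k s)) := by
  have : (monomial n a : MvPolynomial (Fin 3) A) = a • monomial n 1 := by
    rw [MvPolynomial.smul_monomial, smul_eq_mul, mul_one]
  rw [this, mk_smul, mk_monomial_one]

theorem theta_phibar (x : MvPolynomial (Fin 3) A ⧸ stmt10I A e k) :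
    theta A e k (phibar A e k x) = x := by
  obtain ⟨p, rfl⟩ := Ideal.Quotient.mk_surjective x
  rw [phibar_mk]
  induction p using MvPolynomial.induction_on' with
  | add p q hp hq => rw [map_add, map_add, map_add, hp, hq]
  | monomial n a =>
    rw [phi_monomial, map_smul, mk_monomial]
    congr 1
    unfold nfvec
    rcases nf e k n with _ | s
    · simp
    · simp only [Option.elim]
      unfold theta
      rw [Finsupp.linearCombination_single, one_smul]

theorem phibar_theta (v : Sk e k →₀ A) : phibar A e k (theta A e k v) = v := by
  unfold theta
  rw [Finsupp.linearCombination_apply, Finsupp.sum, map_sum]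
  have : ∀ s ∈ v.support, phibar A e k (v s • mkI (mon A e k s)) = Finsupp.single s (v s) := by
    intro s _
    rw [map_smul, phibar_mk, phi_mon, Finsupp.smul_single', mul_one]
  rw [Finset.sum_congr rfl this]
  exact Finsupp.sum_single v

def qequiv : (MvPolynomial (Fin 3) A ⧸ stmt10I A e k) ≃ₗ[A] (Sk e k →₀ A) :=
  LinearEquiv.ofLinear (phibar A e k) (theta A e k)
    (LinearMap.ext fun v => phibar_theta A e k v)
    (LinearMap.ext fun x => theta_phibar A e k x)

def bas : Module.Basis (Sk e k) A (MvPolynomial (Fin 3) A ⧸ stmt10I A e k) :=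
  Module.Basis.ofRepr (qequiv A e k)

theorem bas_apply (s : Sk e k) : bas A e k s = mkI (mon A e k s) := by
  apply (qequiv A e k).injective
  have h1 : qequiv A e k (bas A e k s) = Finsupp.single s 1 := (bas A e k).repr_self s
  have h2 : qequiv A e k (mkI (mon A e k s)) = Finsupp.single s 1 := by
    show phibar A e k (mkI (mon A e k s)) = _
    rw [phibar_mk, phi_mon]
  rw [h1, h2]

end QuotientPart



section NFCoords

theorem nf_coords (e k a b c : ℕ) :
    nf e k ((Finsupp.single 0 a + Finsupp.single 1 b + Finsupp.single 2 c : Fin 3 →₀ ℕ)) =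
      nf' e k a b c := by
  unfold nf
  have c0 : ((Finsupp.single 0 a + Finsupp.single 1 b + Finsupp.single 2 c :
      Fin 3 →₀ ℕ)) 0 = a := by simp [Finsupp.single_apply]
  have c1 : ((Finsupp.single 0 a + Finsupp.single 1 b + Finsupp.single 2 c :
      Fin 3 →₀ ℕ)) 1 = b := by simp [Finsupp.single_apply]
  have c2 : ((Finsupp.single 0 a + Finsupp.single 1 b + Finsupp.single 2 c :
      Fin 3 →₀ ℕ)) 2 = c := by simp [Finsupp.single_apply]
  rw [c0, c1, c2]

theorem nf'_x (e k i γ : ℕ) :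
    nf' e k i 0 γ = if h : γ ≤ k then some (Sum.inl ⟨(i, γ), h⟩) else none := by
  unfold nf'
  rw [dif_pos (Nat.zero_le _)]
  simp only [Nat.zero_mul, Nat.add_zero, Nat.sub_zero]

theorem nf'_y (e k j γ : ℕ) (hj : 1 ≤ j) :
    nf' e k 0 j γ = if h : j * e + γ ≤ k then some (Sum.inr ⟨(j, γ), hj, h⟩) else none := by
  unfold nf'
  rw [dif_neg (by omega)]
  simp only [Nat.sub_zero, Nat.zero_mul, Nat.add_zero]

end NFCoords

noncomputable section PsiPart

variable (A : Type*) [CommRing A] (e k : ℕ)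

local notation "mkI" => Ideal.Quotient.mk (stmt10I A e k)
local notation "mkP" => Ideal.Quotient.mk (Ideal.span {(Polynomial.X : Polynomial A) ^ (k + 1)})

theorem qequiv_mk (p : MvPolynomial (Fin 3) A) : qequiv A e k (mkI p) = phi A e k p := rfl

theorem mkxt (i γ : ℕ) :
    mkI (X 0 ^ i * X 2 ^ γ) =
      if h : γ ≤ k then bas A e k (Sum.inl ⟨(i, γ), h⟩) else 0 := by
  have hm : (X 0 : MvPolynomial (Fin 3) A) ^ i * X 2 ^ γ =
      monomial ((Finsupp.single 0 i + Finsupp.single 1 0 + Finsupp.single 2 γ : Fin 3 →₀ ℕ)) 1 := by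
    rw [← mono3, pow_zero, mul_one]
  rw [hm, mk_monomial_one, nf_coords, nf'_x]
  split_ifs with h
  · rw [bas_apply]; rfl
  · rfl

theorem mkyt (j γ : ℕ) (hj : 1 ≤ j) :
    mkI (X 1 ^ j * X 2 ^ γ) =
      if h : j * e + γ ≤ k then bas A e k (Sum.inr ⟨(j, γ), hj, h⟩) else 0 := by
  have hm : (X 1 : MvPolynomial (Fin 3) A) ^ j * X 2 ^ γ =
      monomial ((Finsupp.single 0 0 + Finsupp.single 1 j + Finsupp.single 2 γ : Fin 3 →₀ ℕ)) 1 := by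
    rw [← mono3, pow_zero, one_mul]
  rw [hm, mk_monomial_one, nf_coords, nf'_y e k j γ hj]
  split_ifs with h
  · rw [bas_apply]; rfl
  · rfl

variable (ψ : (Polynomial A ⧸ Ideal.span {(Polynomial.X : Polynomial A) ^ (k + 1)}) →+*
      (MvPolynomial (Fin 3) A ⧸ stmt10I A e k))
variable (hψC : ∀ a : A,
  ψ (Ideal.Quotient.mk (Ideal.span {(Polynomial.X : Polynomial A) ^ (k + 1)}) (Polynomial.C a)) =
    Ideal.Quotient.mk (stmt10I A e k) (C a))
variable (hψX :
  ψ (Ideal.Quotient.mk (Ideal.span {(Polynomial.X : Polynomial A) ^ (k + 1)}) Polynomial.X) =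
    Ideal.Quotient.mk (stmt10I A e k) (X 2))

include hψC hψX in
theorem psi_mk (q : Polynomial A) :
    ψ (mkP q) = mkI (Polynomial.eval₂ C (X 2) q) := by
  have h : ψ.comp (Ideal.Quotient.mk (Ideal.span {(Polynomial.X : Polynomial A) ^ (k + 1)})) =
      Polynomial.eval₂RingHom ((Ideal.Quotient.mk (stmt10I A e k)).comp MvPolynomial.C)
        (mkI (X 2)) := by
    apply Polynomial.ringHom_ext
    · intro a; simpa using hψC a
    · simpa using hψX
  have h2 := RingHom.congr_fun h q
  rw [RingHom.comp_apply] at h2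
  rw [h2, Polynomial.coe_eval₂RingHom, ← Polynomial.hom_eval₂]

theorem mk_eval₂_mul (q : Polynomial A) (z : MvPolynomial (Fin 3) A) :
    mkI (Polynomial.eval₂ C (X 2) q * z) =
      ∑ γ ∈ q.support, q.coeff γ • mkI (X 2 ^ γ * z) := by
  rw [Polynomial.eval₂_eq_sum, Polynomial.sum_def, Finset.sum_mul, map_sum]
  refine Finset.sum_congr rfl fun γ _ => ?_
  rw [show (C (q.coeff γ) : MvPolynomial (Fin 3) A) * X 2 ^ γ * z = q.coeff γ • (X 2 ^ γ * z) by
    rw [MvPolynomial.smul_eq_C_mul]; ring]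
  rw [mk_smul]

include hψC hψX in
theorem psix_mem (a : Polynomial A ⧸ Ideal.span {(Polynomial.X : Polynomial A) ^ (k + 1)})
    (i : ℕ) :
    ψ a * mkI (X 0 ^ i) ∈ Submodule.span A (Set.range (bas A e k ∘ Sum.inl)) := by
  obtain ⟨q, rfl⟩ := Ideal.Quotient.mk_surjective a
  rw [psi_mk A e k ψ hψC hψX, ← map_mul, mk_eval₂_mul]
  refine Submodule.sum_mem _ fun γ _ => Submodule.smul_mem _ _ ?_
  rw [mul_comm ((X 2 : MvPolynomial (Fin 3) A) ^ γ), mkxt]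
  split_ifs with h
  · exact Submodule.subset_span ⟨⟨(i, γ), h⟩, rfl⟩
  · exact Submodule.zero_mem _

include hψC hψX in
theorem psiy_mem (a : Polynomial A ⧸ Ideal.span {(Polynomial.X : Polynomial A) ^ (k + 1)})
    (j : ℕ) :
    ψ a * mkI (X 1 ^ (j + 1)) ∈ Submodule.span A (Set.range (bas A e k ∘ Sum.inr)) := by
  obtain ⟨q, rfl⟩ := Ideal.Quotient.mk_surjective a
  rw [psi_mk A e k ψ hψC hψX, ← map_mul, mk_eval₂_mul]
  refine Submodule.sum_mem _ fun γ _ => Submodule.smul_mem _ _ ?_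
  rw [mul_comm ((X 2 : MvPolynomial (Fin 3) A) ^ γ), mkyt A e k (j + 1) γ (by omega)]
  split_ifs with h
  · exact Submodule.subset_span ⟨⟨(j + 1, γ), by omega, h⟩, rfl⟩
  · exact Submodule.zero_mem _

end PsiPart



noncomputable section CoordPart

variable (A : Type*) [CommRing A] (e k : ℕ)

local notation "mkI" => Ideal.Quotient.mk (stmt10I A e k)
local notation "mkP" => Ideal.Quotient.mk (Ideal.span {(Polynomial.X : Polynomial A) ^ (k + 1)})

variable (ψ : (Polynomial A ⧸ Ideal.span {(Polynomial.X : Polynomial A) ^ (k + 1)}) →+*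
      (MvPolynomial (Fin 3) A ⧸ stmt10I A e k))
variable (hψC : ∀ a : A,
  ψ (Ideal.Quotient.mk (Ideal.span {(Polynomial.X : Polynomial A) ^ (k + 1)}) (Polynomial.C a)) =
    Ideal.Quotient.mk (stmt10I A e k) (C a))
variable (hψX :
  ψ (Ideal.Quotient.mk (Ideal.span {(Polynomial.X : Polynomial A) ^ (k + 1)}) Polynomial.X) =
    Ideal.Quotient.mk (stmt10I A e k) (X 2))

include hψC hψX in
theorem coordx (q : Polynomial A) (i i0 γ0 : ℕ) (h0 : γ0 ≤ k) :
    (qequiv A e k (ψ (mkP q) * mkI (X 0 ^ i))) (Sum.inl ⟨(i0, γ0), h0⟩) =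
      if i = i0 then q.coeff γ0 else 0 := by
  rw [psi_mk A e k ψ hψC hψX, ← map_mul, qequiv_mk]
  rw [Polynomial.eval₂_eq_sum, Polynomial.sum_def, Finset.sum_mul, map_sum]
  have hterm : ∀ γ : ℕ, (C (q.coeff γ) : MvPolynomial (Fin 3) A) * X 2 ^ γ * X 0 ^ i =
      monomial ((Finsupp.single 0 i + Finsupp.single 1 0 + Finsupp.single 2 γ : Fin 3 →₀ ℕ))
        (q.coeff γ) := by
    intro γ
    rw [show (monomial ((Finsupp.single 0 i + Finsupp.single 1 0 + Finsupp.single 2 γ :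
        Fin 3 →₀ ℕ)) (q.coeff γ) : MvPolynomial (Fin 3) A) = q.coeff γ •
        monomial ((Finsupp.single 0 i + Finsupp.single 1 0 + Finsupp.single 2 γ : Fin 3 →₀ ℕ))
        1 by rw [MvPolynomial.smul_monomial, smul_eq_mul, mul_one]]
    rw [← mono3, pow_zero, mul_one, MvPolynomial.smul_eq_C_mul]
    ring
  rw [Finset.sum_congr rfl fun γ _ => by rw [hterm γ, phi_monomial]]
  rw [Finsupp.finset_sum_apply]
  have hval : ∀ γ ∈ q.support,
      ((q.coeff γ • nfvec A e k ((Finsupp.single 0 i + Finsupp.single 1 0 + Finsupp.single 2 γ :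
        Fin 3 →₀ ℕ))) : Sk e k →₀ A) (Sum.inl ⟨(i0, γ0), h0⟩) =
      if γ = γ0 ∧ i = i0 then q.coeff γ else 0 := by
    intro γ _
    unfold nfvec
    rw [nf_coords, nf'_x]
    split_ifs with h1 h2 h3
    · obtain ⟨rfl, rfl⟩ := h2
      simp [Finsupp.single_apply]
    · have hne : (Sum.inl ⟨(i, γ), h1⟩ : Sk e k) ≠ Sum.inl ⟨(i0, γ0), h0⟩ := by
        intro hh
        simp only [Sum.inl.injEq, Subtype.mk.injEq, Prod.mk.injEq] at hh
        exact h2 ⟨hh.2, hh.1⟩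
      simp [Option.elim, Finsupp.single_apply, hne]
    · exact absurd (h3.1 ▸ h0) h1
    · simp
  rw [Finset.sum_congr rfl hval]
  by_cases hi : i = i0
  · subst hi
    simp only [and_true]
    rw [Finset.sum_ite_eq' q.support γ0 (fun γ => q.coeff γ)]
    by_cases hγ : γ0 ∈ q.support
    · simp [hγ]
    · simp [hγ, Polynomial.notMem_support_iff.mp hγ]
  · simp [hi]

set_option synthInstance.maxHeartbeats 1000000 in
include hψC hψX in
theorem Tinj (d : ℕ →₀ (Polynomial A ⧸ Ideal.span {(Polynomial.X : Polynomial A) ^ (k + 1)}))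
    (h : d.sum (fun i a => ψ a * mkI (X 0 ^ i)) = 0) : d = 0 := by
  choose rep hrepeq using fun a :
    Polynomial A ⧸ Ideal.span {(Polynomial.X : Polynomial A) ^ (k + 1)} =>
      Ideal.Quotient.mk_surjective a
  ext i0
  by_cases hs : i0 ∈ d.support
  swap
  · simpa using Finsupp.notMem_support_iff.mp hs
  have key : ∀ γ0, γ0 ≤ k → (rep (d i0)).coeff γ0 = 0 := by
    intro γ0 h0
    have h1 : (qequiv A e k (d.sum fun i a => ψ a * mkI (X 0 ^ i)) : Sk e k →₀ A)
        (Sum.inl ⟨(i0, γ0), h0⟩) = 0 := by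
      rw [h, (qequiv A e k).map_zero]
      rfl
    rw [Finsupp.sum, map_sum, Finsupp.finset_sum_apply] at h1
    have h2 : ∀ i ∈ d.support,
        ((qequiv A e k) (ψ (d i) * mkI (X 0 ^ i)) : Sk e k →₀ A) (Sum.inl ⟨(i0, γ0), h0⟩) =
          if i = i0 then (rep (d i)).coeff γ0 else 0 := by
      intro i _
      conv_lhs => rw [← hrepeq (d i)]
      exact coordx A e k ψ hψC hψX (rep (d i)) i i0 γ0 h0
    rw [Finset.sum_congr rfl h2,
      Finset.sum_ite_eq' d.support i0 (fun i => (rep (d i)).coeff γ0), if_pos hs] at h1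
    exact h1
  show d i0 = 0
  rw [← hrepeq (d i0), Ideal.Quotient.eq_zero_iff_mem, Ideal.mem_span_singleton,
    Polynomial.X_pow_dvd_iff]
  exact fun γ0 hγ0 => key γ0 (by omega)

theorem span_disjoint :
    Disjoint (Submodule.span A (Set.range (bas A e k ∘ Sum.inl)))
      (Submodule.span A (Set.range (bas A e k ∘ Sum.inr))) := by
  have h1 := (bas A e k).linearIndependent.disjoint_span_image
    (s := Set.range (Sum.inl : {p : ℕ × ℕ // p.2 ≤ k} → Sk e k))
    (t := Set.range (Sum.inr : {p : ℕ × ℕ // 1 ≤ p.1 ∧ p.1 * e + p.2 ≤ k} → Sk e k))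
    Set.isCompl_range_inl_range_inr.disjoint
  simpa [Set.range_comp] using h1

include hψC hψX in
theorem psi_smul_x (a : A) (i γ : ℕ) :
    ψ (mkP (Polynomial.C a * Polynomial.X ^ γ)) * mkI (X 0 ^ i) =
      a • mkI (X 0 ^ i * X 2 ^ γ) := by
  rw [psi_mk A e k ψ hψC hψX, ← map_mul, Polynomial.eval₂_mul, Polynomial.eval₂_C,
    Polynomial.eval₂_X_pow,
    show (C a : MvPolynomial (Fin 3) A) * X 2 ^ γ * X 0 ^ i = a • (X 0 ^ i * X 2 ^ γ) by
      rw [MvPolynomial.smul_eq_C_mul]; ring, mk_smul]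

include hψC hψX in
theorem psi_smul_y (a : A) (j γ : ℕ) :
    ψ (mkP (Polynomial.C a * Polynomial.X ^ γ)) * mkI (X 1 ^ j) =
      a • mkI (X 1 ^ j * X 2 ^ γ) := by
  rw [psi_mk A e k ψ hψC hψX, ← map_mul, Polynomial.eval₂_mul, Polynomial.eval₂_C,
    Polynomial.eval₂_X_pow,
    show (C a : MvPolynomial (Fin 3) A) * X 2 ^ γ * X 1 ^ j = a • (X 1 ^ j * X 2 ^ γ) by
      rw [MvPolynomial.smul_eq_C_mul]; ring, mk_smul]

include hψC hψX in
theorem gen2 (r : MvPolynomial (Fin 3) A ⧸ stmt10I A e k) :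
    ∃ c : (ℕ ⊕ ℕ) →₀ (Polynomial A ⧸ Ideal.span {(Polynomial.X : Polynomial A) ^ (k + 1)}),
      r = c.sum (fun s a => ψ a *
        Sum.elim (fun i => mkI ((X 0 : MvPolynomial (Fin 3) A) ^ i))
          (fun j => mkI ((X 1 : MvPolynomial (Fin 3) A) ^ (j + 1))) s) := by
  obtain ⟨p, rfl⟩ := Ideal.Quotient.mk_surjective r
  induction p using MvPolynomial.induction_on' with
  | add p q hp hq =>
    obtain ⟨c1, hc1⟩ := hp
    obtain ⟨c2, hc2⟩ := hq
    refine ⟨c1 + c2, ?_⟩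
    rw [map_add, hc1, hc2, Finsupp.sum_add_index' (fun s => by simp) (fun s b1 b2 => by
      rw [map_add, add_mul])]
  | monomial n a =>
    rw [mk_monomial]
    rcases hnf : nf e k n with _ | (⟨⟨i, γ⟩, hγ⟩ | ⟨⟨j, γ⟩, hj, hγ⟩)
    · exact ⟨0, by simp [Finsupp.sum_zero_index]⟩
    · refine ⟨Finsupp.single (Sum.inl i) (mkP (Polynomial.C a * Polynomial.X ^ γ)), ?_⟩
      rw [Finsupp.sum_single_index (by simp)]
      simp only [Sum.elim_inl]
      rw [psi_smul_x A e k ψ hψC hψX]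
      rfl
    · refine ⟨Finsupp.single (Sum.inr (j - 1)) (mkP (Polynomial.C a * Polynomial.X ^ γ)), ?_⟩
      rw [Finsupp.sum_single_index (by simp)]
      simp only [Sum.elim_inr]
      rw [show j - 1 + 1 = j by omega, psi_smul_y A e k ψ hψC hψX]
      rfl

include hψC hψX in
theorem exist3 (r : MvPolynomial (Fin 3) A ⧸ stmt10I A e k) :
    ∃ cw : (ℕ →₀ (Polynomial A ⧸ Ideal.span {(Polynomial.X : Polynomial A) ^ (k + 1)})) ×
        (MvPolynomial (Fin 3) A ⧸ stmt10I A e k),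
      (∃ d : ℕ →₀ (Polynomial A ⧸ Ideal.span {(Polynomial.X : Polynomial A) ^ (k + 1)}),
        cw.2 = d.sum (fun j a => ψ a * mkI ((X 1 : MvPolynomial (Fin 3) A) ^ (j + 1)))) ∧
      r = cw.1.sum (fun i a => ψ a * mkI ((X 0 : MvPolynomial (Fin 3) A) ^ i)) + cw.2 := by
  obtain ⟨p, rfl⟩ := Ideal.Quotient.mk_surjective r
  induction p using MvPolynomial.induction_on' with
  | add p q hp hq =>
    obtain ⟨cw1, ⟨d1, hd1⟩, hr1⟩ := hp
    obtain ⟨cw2, ⟨d2, hd2⟩, hr2⟩ := hq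
    refine ⟨cw1 + cw2, ⟨d1 + d2, ?_⟩, ?_⟩
    · rw [Prod.snd_add, hd1, hd2, Finsupp.sum_add_index' (fun s => by simp) (fun s b1 b2 => by
        rw [map_add, add_mul])]
    · rw [Prod.fst_add, Prod.snd_add, map_add, hr1, hr2,
        Finsupp.sum_add_index' (fun s => by simp) (fun s b1 b2 => by
        rw [map_add, add_mul])]
      ring
  | monomial n a =>
    rw [mk_monomial]
    rcases hnf : nf e k n with _ | (⟨⟨i, γ⟩, hγ⟩ | ⟨⟨j, γ⟩, hj, hγ⟩)
    · exact ⟨⟨0, 0⟩, ⟨0, by simp [Finsupp.sum_zero_index]⟩, by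
        simp [Finsupp.sum_zero_index]⟩
    · refine ⟨⟨Finsupp.single i (mkP (Polynomial.C a * Polynomial.X ^ γ)), 0⟩,
        ⟨0, by simp [Finsupp.sum_zero_index]⟩, ?_⟩
      dsimp only
      rw [Finsupp.sum_single_index (by simp), psi_smul_x A e k ψ hψC hψX, add_zero]
      rfl
    · refine ⟨⟨0, a • mkI (mon A e k (Sum.inr ⟨(j, γ), hj, hγ⟩))⟩,
        ⟨Finsupp.single (j - 1) (mkP (Polynomial.C a * Polynomial.X ^ γ)), ?_⟩, ?_⟩
      · dsimp only
        rw [Finsupp.sum_single_index (by simp), show j - 1 + 1 = j by omega,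
          psi_smul_y A e k ψ hψC hψX]
        rfl
      · simp [Finsupp.sum_zero_index]

include hψC hψX in
theorem uniq3 (r : MvPolynomial (Fin 3) A ⧸ stmt10I A e k)
    (cw cw' : (ℕ →₀ (Polynomial A ⧸ Ideal.span {(Polynomial.X : Polynomial A) ^ (k + 1)})) ×
        (MvPolynomial (Fin 3) A ⧸ stmt10I A e k))
    (hcw : (∃ d : ℕ →₀ (Polynomial A ⧸ Ideal.span {(Polynomial.X : Polynomial A) ^ (k + 1)}), cw.2 = d.sum (fun j a => ψ a * mkI ((X 1 : MvPolynomial (Fin 3) A) ^ (j + 1)))) ∧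
      r = cw.1.sum (fun i a => ψ a * mkI ((X 0 : MvPolynomial (Fin 3) A) ^ i)) + cw.2)
    (hcw' : (∃ d : ℕ →₀ (Polynomial A ⧸ Ideal.span {(Polynomial.X : Polynomial A) ^ (k + 1)}), cw'.2 = d.sum (fun j a => ψ a * mkI ((X 1 : MvPolynomial (Fin 3) A) ^ (j + 1)))) ∧
      r = cw'.1.sum (fun i a => ψ a * mkI ((X 0 : MvPolynomial (Fin 3) A) ^ i)) + cw'.2) :
    cw = cw' := by
  obtain ⟨⟨d, hd⟩, hr⟩ := hcw
  obtain ⟨⟨d', hd'⟩, hr'⟩ := hcw'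
  have hw : cw.2 ∈ Submodule.span A (Set.range (bas A e k ∘ Sum.inr)) := by
    rw [hd]
    exact Submodule.sum_mem _ fun j _ => psiy_mem A e k ψ hψC hψX _ j
  have hw' : cw'.2 ∈ Submodule.span A (Set.range (bas A e k ∘ Sum.inr)) := by
    rw [hd']
    exact Submodule.sum_mem _ fun j _ => psiy_mem A e k ψ hψC hψX _ j
  have hx : cw.1.sum (fun i a => ψ a * mkI ((X 0 : MvPolynomial (Fin 3) A) ^ i)) ∈
      Submodule.span A (Set.range (bas A e k ∘ Sum.inl)) :=
    Submodule.sum_mem _ fun i _ => psix_mem A e k ψ hψC hψX _ i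
  have hx' : cw'.1.sum (fun i a => ψ a * mkI ((X 0 : MvPolynomial (Fin 3) A) ^ i)) ∈
      Submodule.span A (Set.range (bas A e k ∘ Sum.inl)) :=
    Submodule.sum_mem _ fun i _ => psix_mem A e k ψ hψC hψX _ i
  have heq : cw.1.sum (fun i a => ψ a * mkI ((X 0 : MvPolynomial (Fin 3) A) ^ i)) -
      cw'.1.sum (fun i a => ψ a * mkI ((X 0 : MvPolynomial (Fin 3) A) ^ i)) =
      cw'.2 - cw.2 := by
    have := hr.symm.trans hr'
    linear_combination this
  have hz : cw.1.sum (fun i a => ψ a * mkI ((X 0 : MvPolynomial (Fin 3) A) ^ i)) -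
      cw'.1.sum (fun i a => ψ a * mkI ((X 0 : MvPolynomial (Fin 3) A) ^ i)) = 0 := by
    refine Submodule.disjoint_def.mp (span_disjoint A e k) _ (Submodule.sub_mem _ hx hx') ?_
    rw [heq]
    exact Submodule.sub_mem _ hw' hw
  have hc : cw.1 = cw'.1 := by
    have hsub : (cw.1 - cw'.1).sum (fun i a => ψ a * mkI ((X 0 : MvPolynomial (Fin 3) A) ^ i)) =
        0 := by
      rw [Finsupp.sum_sub_index (fun i b1 b2 => by rw [map_sub, sub_mul])]
      exact hz
    have := Tinj A e k ψ hψC hψX _ hsub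
    exact sub_eq_zero.mp this
  have hwq : cw.2 = cw'.2 := by
    have h2 : cw'.2 - cw.2 = 0 := by rw [← heq, hz]
    have := sub_eq_zero.mp h2
    exact this.symm
  exact Prod.ext hc hwq

end CoordPart

end Stmt10Aux

/-- `R₋` is a free `A`-module with basis `{x^i t^γ : i ≥ 0, γ ≤ k} ∪
{y^j t^γ : j ≥ 1, je + γ ≤ k}`; in particular it is generated over `A[t]/(t^{k+1})`
(acting through `ψ`) by the `x^i` (`i ≥ 0`) and `y^j` (`j ≥ 1`), and the
`A[t]/(t^{k+1})`-submodule generated by the `x^i` is a free direct summand with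
basis `{x^i}`. -/
theorem stmt10 (A : Type*) [CommRing A] (e k : ℕ) (he : 1 ≤ e)
    (ψ : (Polynomial A ⧸ Ideal.span {(Polynomial.X : Polynomial A) ^ (k + 1)}) →+*
      (MvPolynomial (Fin 3) A ⧸ stmt10I A e k))
    (hψC : ∀ a : A,
      ψ (Ideal.Quotient.mk (Ideal.span {(Polynomial.X : Polynomial A) ^ (k + 1)})
          (Polynomial.C a)) =
        Ideal.Quotient.mk (stmt10I A e k) (C a))
    (hψX : ψ (Ideal.Quotient.mk (Ideal.span {(Polynomial.X : Polynomial A) ^ (k + 1)})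
          Polynomial.X) =
        Ideal.Quotient.mk (stmt10I A e k) (X 2)) :
    (∃ B : Module.Basis ({p : ℕ × ℕ // p.2 ≤ k} ⊕ {p : ℕ × ℕ // 1 ≤ p.1 ∧ p.1 * e + p.2 ≤ k}) A
        (MvPolynomial (Fin 3) A ⧸ stmt10I A e k),
      (∀ p : {p : ℕ × ℕ // p.2 ≤ k},
        B (Sum.inl p) = Ideal.Quotient.mk (stmt10I A e k)
          ((X 0 : MvPolynomial (Fin 3) A) ^ p.1.1 * (X 2) ^ p.1.2)) ∧
      (∀ p : {p : ℕ × ℕ // 1 ≤ p.1 ∧ p.1 * e + p.2 ≤ k},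
        B (Sum.inr p) = Ideal.Quotient.mk (stmt10I A e k)
          ((X 1 : MvPolynomial (Fin 3) A) ^ p.1.1 * (X 2) ^ p.1.2))) ∧
    (∀ r : MvPolynomial (Fin 3) A ⧸ stmt10I A e k,
      ∃ c : (ℕ ⊕ ℕ) →₀ (Polynomial A ⧸ Ideal.span {(Polynomial.X : Polynomial A) ^ (k + 1)}),
        r = c.sum (fun s a => ψ a *
          Sum.elim
            (fun i => Ideal.Quotient.mk (stmt10I A e k)
              ((X 0 : MvPolynomial (Fin 3) A) ^ i))
            (fun j => Ideal.Quotient.mk (stmt10I A e k)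
              ((X 1 : MvPolynomial (Fin 3) A) ^ (j + 1))) s)) ∧
    (∀ r : MvPolynomial (Fin 3) A ⧸ stmt10I A e k,
      ∃! cw : (ℕ →₀ (Polynomial A ⧸ Ideal.span {(Polynomial.X : Polynomial A) ^ (k + 1)})) ×
          (MvPolynomial (Fin 3) A ⧸ stmt10I A e k),
        (∃ d : ℕ →₀ (Polynomial A ⧸ Ideal.span {(Polynomial.X : Polynomial A) ^ (k + 1)}),
          cw.2 = d.sum (fun j a => ψ a * Ideal.Quotient.mk (stmt10I A e k)
            ((X 1 : MvPolynomial (Fin 3) A) ^ (j + 1)))) ∧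
        r = cw.1.sum (fun i a => ψ a * Ideal.Quotient.mk (stmt10I A e k)
            ((X 0 : MvPolynomial (Fin 3) A) ^ i)) + cw.2) := by
  refine ⟨⟨Stmt10Aux.bas A e k, ?_, ?_⟩, ?_, ?_⟩
  · intro p
    rw [Stmt10Aux.bas_apply]
    rfl
  · intro p
    rw [Stmt10Aux.bas_apply]
    rfl
  · intro r
    exact Stmt10Aux.gen2 A e k ψ hψC hψX r
  · intro r
    obtain ⟨cw, hcw⟩ := Stmt10Aux.exist3 A e k ψ hψC hψX r
    exact ⟨cw, hcw, fun y hy => Stmt10Aux.uniq3 A e k ψ hψC hψX r y cw hy hcw⟩
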